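/- arXiv:0908.4492 — 4 statements merged into one kernel-verified Lean document; each statement's English description precedes it below -/
import Mathlib

section
/- Let A be a small additive category and F : A ‚Üí k-Mod a functor. If the d-th cross effect cr_d(F) : F ‚Üí ŌĄ_d F vanishes, then cr_i(F) = 0 for every i ‚Č• d, where ŌĄ_d is precomposition with t_d : a ‚Ü¶ a^{‚äē(d+1)} and cr_d(F) = ő£_{I ‚äÜ {0,...,d}} (‚ąí1)^{|I|} (u_I)_* with u_I : a ‚Üí a^{‚äē(d+1)} the natural map whose i-th component is the identity if i ‚àą I and 0 otherwise. -/
open CategoryTheory CategoryTheory.Limits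

noncomputable section

variable {A : Type*} [Category A] [Preadditive A] [HasFiniteBiproducts A]
variable {D : Type*} [Category D] [Preadditive D]

/-- `t d : a ↦ a^{⊕(d+1)}` -/
@[simps] def tFun (A : Type*) [Category A] [Preadditive A] [HasFiniteBiproducts A] (d : ℕ) :
    A ⥤ A where
  obj a := ⨁ (fun _ : Fin (d + 1) => a)
  map f := biproduct.map (fun _ => f)

/-- `u_I : id ⟶ t_d` -/
@[simps] def uNat (A : Type*) [Category A] [Preadditive A] [HasFiniteBiproducts A] (d : ℕ)
    (I : Finset (Fin (d + 1))) : 𝟭 A ⟶ tFun A d where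
  app a := biproduct.lift (fun i => if i ∈ I then 𝟙 a else 0)
  naturality a b f := by
    refine biproduct.hom_ext _ _ fun j => ?_
    by_cases h : j ∈ I <;> simp [h, tFun]

/-- `p_I : t_d ⟶ id` -/
@[simps] def pNat (A : Type*) [Category A] [Preadditive A] [HasFiniteBiproducts A] (d : ℕ)
    (I : Finset (Fin (d + 1))) : tFun A d ⟶ 𝟭 A where
  app a := biproduct.desc (fun i => if i ∈ I then 𝟙 a else 0)
  naturality a b f := by
    refine biproduct.hom_ext' _ _ fun j => ?_
    by_cases h : j ∈ I <;> simp [h, tFun]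

/-- the cross effect `cr_d(F) : F ⟶ τ_d F` -/
@[simps] def crNat (d : ℕ) (F : A ⥤ D) : F ⟶ tFun A d ⋙ F where
  app a := ∑ I : Finset (Fin (d + 1)), (-1 : ℤ) ^ I.card • F.map ((uNat A d I).app a)
  naturality a b f := by
    simp only [Functor.comp_map, Preadditive.comp_sum, Preadditive.sum_comp,
      Preadditive.comp_zsmul, Preadditive.zsmul_comp]
    refine Finset.sum_congr rfl (fun I _ => ?_)
    have h := (uNat A d I).naturality f
    simp only [Functor.id_map] at h
    rw [← F.map_comp, ← F.map_comp, h]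

/-- the co-cross effect `cr_d^{op}(F) : τ_d F ⟶ F` -/
@[simps] def crOpNat (d : ℕ) (F : A ⥤ D) : tFun A d ⋙ F ⟶ F where
  app a := ∑ I : Finset (Fin (d + 1)), (-1 : ℤ) ^ I.card • F.map ((pNat A d I).app a)
  naturality a b f := by
    simp only [Functor.comp_map, Preadditive.comp_sum, Preadditive.sum_comp,
      Preadditive.comp_zsmul, Preadditive.zsmul_comp]
    refine Finset.sum_congr rfl (fun I _ => ?_)
    have h := (pNat A d I).naturality f
    simp only [Functor.id_map] at h
    rw [← F.map_comp, ← F.map_comp, h]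

/-- `F` is polynomial of degree at most `d`. -/
def PolyDeg (d : ℕ) (F : A ⥤ D) : Prop := crNat d F = 0

end

noncomputable section AuxLemmas

variable {A : Type*} [Category A] [Preadditive A] [HasFiniteBiproducts A]
variable {D : Type*} [Category D] [Preadditive D]

/-- alternating sum of `F` applied to `c + partial sums of f` -/
def altS (F : A ⥤ D) (n : ℕ) {a b : A} (c : a ⟶ b) (f : Fin n → (a ⟶ b)) :
    F.obj a ⟶ F.obj b :=
  ∑ χ : Fin n → Bool, ((-1 : ℤ) ^ (∑ i, if χ i = true then 1 else 0 : ℕ)) •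
    F.map (c + ∑ i, if χ i then f i else 0)

lemma altS_succ (F : A ⥤ D) (n : ℕ) {a b : A} (c : a ⟶ b) (f : Fin (n + 1) → (a ⟶ b)) :
    altS F (n + 1) c f =
      altS F n c (f ∘ Fin.succ) - altS F n (c + f 0) (f ∘ Fin.succ) := by
  unfold altS
  rw [← (Fin.consEquiv (fun _ : Fin (n + 1) => Bool)).sum_comp, Fintype.sum_prod_type,
    Fintype.sum_bool]
  have htrue : (∑ τ : Fin n → Bool,
      ((-1 : ℤ) ^ (∑ i, if (Fin.consEquiv (fun _ : Fin (n + 1) => Bool)) (true, τ) i = true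
          then 1 else 0 : ℕ)) •
        F.map (c + ∑ i, if (Fin.consEquiv (fun _ : Fin (n + 1) => Bool)) (true, τ) i
          then f i else 0)) =
      -(∑ τ : Fin n → Bool, ((-1 : ℤ) ^ (∑ i, if τ i = true then 1 else 0 : ℕ)) •
        F.map ((c + f 0) + ∑ i, if τ i then (f ∘ Fin.succ) i else 0)) := by
    rw [← Finset.sum_neg_distrib]
    refine Finset.sum_congr rfl fun τ _ => ?_
    have hc : (∑ i, if (Fin.consEquiv (fun _ : Fin (n + 1) => Bool)) (true, τ) i = true
        then 1 else 0 : ℕ) = 1 + ∑ i : Fin n, if τ i = true then 1 else 0 := by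
      show (∑ i, if (Fin.cons true τ : Fin (n + 1) → Bool) i = true then 1 else 0 : ℕ) = _
      rw [Fin.sum_univ_succ]
      simp
    have hm : (∑ i, if (Fin.consEquiv (fun _ : Fin (n + 1) => Bool)) (true, τ) i
        then f i else 0) = f 0 + ∑ i : Fin n, if τ i then f i.succ else 0 := by
      show (∑ i, if (Fin.cons true τ : Fin (n + 1) → Bool) i = true then f i else 0) = _
      rw [Fin.sum_univ_succ]
      simp
    rw [hc, hm, pow_add, pow_one, neg_one_mul, neg_smul, ← add_assoc]
    rfl
  have hfalse : (∑ τ : Fin n → Bool,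
      ((-1 : ℤ) ^ (∑ i, if (Fin.consEquiv (fun _ : Fin (n + 1) => Bool)) (false, τ) i = true
          then 1 else 0 : ℕ)) •
        F.map (c + ∑ i, if (Fin.consEquiv (fun _ : Fin (n + 1) => Bool)) (false, τ) i
          then f i else 0)) =
      ∑ τ : Fin n → Bool, ((-1 : ℤ) ^ (∑ i, if τ i = true then 1 else 0 : ℕ)) •
        F.map (c + ∑ i, if τ i then (f ∘ Fin.succ) i else 0) := by
    refine Finset.sum_congr rfl fun τ _ => ?_
    have hc : (∑ i, if (Fin.consEquiv (fun _ : Fin (n + 1) => Bool)) (false, τ) i = true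
        then 1 else 0 : ℕ) = ∑ i : Fin n, if τ i = true then 1 else 0 := by
      show (∑ i, if (Fin.cons false τ : Fin (n + 1) → Bool) i = true then 1 else 0 : ℕ) = _
      rw [Fin.sum_univ_succ]
      simp
    have hm : (∑ i, if (Fin.consEquiv (fun _ : Fin (n + 1) => Bool)) (false, τ) i
        then f i else 0) = ∑ i : Fin n, if τ i then f i.succ else 0 := by
      show (∑ i, if (Fin.cons false τ : Fin (n + 1) → Bool) i = true then f i else 0) = _
      rw [Fin.sum_univ_succ]
      simp
    rw [hc, hm]
    rfl
  rw [htrue, hfalse]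
  abel

/-- the equivalence between boolean functions and finsets -/
def boolFinsetEquiv (m : ℕ) : (Fin m → Bool) ≃ Finset (Fin m) where
  toFun χ := Finset.univ.filter fun i => χ i = true
  invFun I := fun i => decide (i ∈ I)
  left_inv χ := by funext i; simp
  right_inv I := by ext i; simp

lemma lift_ite_eq (a : A) (m : ℕ) (χ : Fin m → Bool) :
    biproduct.lift (fun i => if χ i = true then 𝟙 a else 0) =
      ∑ i : Fin m, if χ i = true then biproduct.ι (fun _ : Fin m => a) i else 0 := by
  refine biproduct.hom_ext _ _ fun j => ?_
  rw [biproduct.lift_π, Preadditive.sum_comp]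
  rw [Finset.sum_eq_single j]
  · by_cases h : χ j <;> simp [h, biproduct.ι_π]
  · intro i _ hij
    by_cases h : χ i <;> simp [h, biproduct.ι_π, hij]
  · simp

lemma crNat_app_eq (n : ℕ) (F : A ⥤ D) (a : A) :
    (crNat n F).app a =
      altS F (n + 1) 0 (fun i => biproduct.ι (fun _ : Fin (n + 1) => a) i) := by
  rw [crNat_app, altS]
  refine (Fintype.sum_equiv (boolFinsetEquiv (n + 1)) _ _ fun χ => ?_).symm
  simp only [boolFinsetEquiv, Equiv.coe_fn_mk, uNat_app, zero_add, Finset.card_filter]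
  congr 1
  have : (fun i => if i ∈ Finset.univ.filter (fun i => χ i = true) then 𝟙 a else 0) =
      (fun i => if χ i = true then 𝟙 a else 0) := by
    funext i; simp
  rw [this, ← lift_ite_eq]
  rfl

lemma altS_star (n : ℕ) (F : A ⥤ D) (h : crNat n F = 0) {a b : A}
    (f : Fin (n + 1) → (a ⟶ b)) : altS F (n + 1) 0 f = 0 := by
  have h0 : (crNat n F).app a = 0 := by rw [h]; rfl
  have key : altS F (n + 1) 0 f = (crNat n F).app a ≫ F.map (biproduct.desc f) := by
    rw [crNat_app, Preadditive.sum_comp, altS]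
    refine Fintype.sum_equiv (boolFinsetEquiv (n + 1)) _ _ fun χ => ?_
    erw [Preadditive.zsmul_comp, ← F.map_comp]
    simp only [boolFinsetEquiv, Equiv.coe_fn_mk, uNat_app, biproduct.lift_desc,
      Finset.card_filter]
    congr 2
    rw [zero_add]
    erw [biproduct.lift_desc]
    refine Finset.sum_congr rfl fun i _ => ?_
    by_cases hi : χ i <;> simp [hi]
  rw [key, h0, zero_comp]

lemma altS_shift (n : ℕ) (F : A ⥤ D) (h : crNat n F = 0) {a b : A}
    (c : a ⟶ b) (f : Fin n → (a ⟶ b)) : altS F n c f = altS F n 0 f := by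
  have hs := altS_star n F h (Fin.cons c f)
  rw [altS_succ] at hs
  have h1 : (Fin.cons c f ∘ Fin.succ : Fin n → (a ⟶ b)) = f := by
    funext i; simp
  have h2 : (Fin.cons c f : Fin (n + 1) → (a ⟶ b)) 0 = c := rfl
  rw [h1, h2, zero_add, sub_eq_zero] at hs
  exact hs.symm

lemma crNat_step (n : ℕ) (F : A ⥤ D) (h : crNat n F = 0) : crNat (n + 1) F = 0 := by
  apply NatTrans.ext
  funext a
  show (crNat (n + 1) F).app a = 0
  rw [crNat_app_eq, altS_succ, altS_succ, altS_succ]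
  simp only [altS_shift n F h]
  abel

end AuxLemmas

noncomputable section

/-- If the `d`-th cross effect of `F : A ⥤ k-Mod` vanishes then so does `cr_i(F)` for all
`i ≥ d`. -/
theorem stmt2 (k : Type) [CommRing k] (A : Type) [SmallCategory A] [Preadditive A]
    [HasFiniteBiproducts A] (d : ℕ) (F : A ⥤ ModuleCat k)
    (h : crNat d F = 0) :
    ∀ i : ℕ, d ≤ i → crNat i F = 0 := by
  intro i hi
  induction i, hi using Nat.le_induction with
  | base => exact h
  | succ n hn ih => exact crNat_step n F ih

end
end

section
/- There exists an involutive natural transformation ő≥ : ŌĄ_d¬≤ ‚Üí ŌĄ_d¬≤ on the functor category Fct(A, k-Mod) satisfying ő≥ ‚ąė ŌĄ_d(cr_d) = cr_d(ŌĄ_d), i.e. ő≥ exchanges the two ways of iterating the cross-effect inclusion. -/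
open CategoryTheory CategoryTheory.Limits

noncomputable section

variable (k : Type) [CommRing k] (A : Type) [SmallCategory A] [Preadditive A]
  [HasFiniteBiproducts A]

/-- `τ_d`, precomposition with `t_d`, as an endofunctor of the functor category. -/
def tauFun (d : ℕ) : (A ⥤ ModuleCat k) ⥤ (A ⥤ ModuleCat k) :=
  (Functor.whiskeringLeft A A (ModuleCat k)).obj (tFun A d)


section Swap

variable {A : Type*} [Category A] [Preadditive A] [HasFiniteBiproducts A]

/-- swap of the two biproduct indices -/
def swapHom (d : ℕ) (a : A) :
    (tFun A d).obj ((tFun A d).obj a) ⟶ (tFun A d).obj ((tFun A d).obj a) :=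
  biproduct.lift fun j => biproduct.lift fun i =>
    biproduct.π (fun _ : Fin (d + 1) => (tFun A d).obj a) i ≫
      biproduct.π (fun _ : Fin (d + 1) => a) j

@[simp] lemma swapHom_π (d : ℕ) (a : A) (j i : Fin (d + 1)) :
    swapHom d a ≫ biproduct.π _ j ≫ biproduct.π (fun _ : Fin (d + 1) => a) i =
      biproduct.π (fun _ : Fin (d + 1) => (tFun A d).obj a) i ≫
        biproduct.π (fun _ : Fin (d + 1) => a) j := by
  simp only [swapHom]
  erw [biproduct.lift_π_assoc, biproduct.lift_π]
  rfl

/-- `swapHom` with its source and target written as iterated biproducts -/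
def swapHom' (d : ℕ) (a : A) :
    (⨁ fun _ : Fin (d + 1) => ⨁ fun _ : Fin (d + 1) => a) ⟶
      (⨁ fun _ : Fin (d + 1) => ⨁ fun _ : Fin (d + 1) => a) :=
  biproduct.lift fun j => biproduct.lift fun i =>
    biproduct.π (fun _ : Fin (d + 1) => ⨁ fun _ : Fin (d + 1) => a) i ≫
      biproduct.π (fun _ : Fin (d + 1) => a) j

lemma swapHom_invol (d : ℕ) (a : A) : swapHom d a ≫ swapHom d a = 𝟙 _ := by
  change swapHom' d a ≫ swapHom' d a = 𝟙 _
  refine biproduct.hom_ext _ _ fun j => biproduct.hom_ext _ _ fun i => ?_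
  simp [swapHom']

lemma swapHom_natural (d : ℕ) {a b : A} (f : a ⟶ b) :
    (tFun A d).map ((tFun A d).map f) ≫ swapHom d b =
      swapHom d a ≫ (tFun A d).map ((tFun A d).map f) := by
  change (biproduct.map fun _ => biproduct.map fun _ => f) ≫ swapHom' d b =
    swapHom' d a ≫ (biproduct.map fun _ => biproduct.map fun _ => f)
  refine biproduct.hom_ext _ _ fun j => biproduct.hom_ext _ _ fun i => ?_
  simp [swapHom']

lemma uNat_swap (d : ℕ) (I : Finset (Fin (d + 1))) (a : A) :
    (uNat A d I).app ((tFun A d).obj a) ≫ swapHom d a =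
      (tFun A d).map ((uNat A d I).app a) := by
  change (biproduct.lift fun i => if i ∈ I then 𝟙 (⨁ fun _ : Fin (d + 1) => a) else 0) ≫
      swapHom' d a = biproduct.map fun _ => biproduct.lift fun i => if i ∈ I then 𝟙 a else 0
  refine biproduct.hom_ext _ _ fun j => biproduct.hom_ext _ _ fun i => ?_
  by_cases h : i ∈ I <;> by_cases h' : j ∈ I <;> simp [swapHom', h, h']

end Swap

/-- There is an involutive natural transformation `γ : τ_d² ⟶ τ_d²` with
`γ ∘ τ_d(cr_d) = cr_d(τ_d)`. -/
theorem stmt7 (d : ℕ) :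
    ∃ γ : ∀ F : A ⥤ ModuleCat k,
        (tauFun k A d).obj ((tauFun k A d).obj F) ⟶ (tauFun k A d).obj ((tauFun k A d).obj F),
      -- naturality of `γ`
      (∀ (F G : A ⥤ ModuleCat k) (f : F ⟶ G),
        (tauFun k A d).map ((tauFun k A d).map f) ≫ γ G =
          γ F ≫ (tauFun k A d).map ((tauFun k A d).map f)) ∧
      -- `γ` is involutive
      (∀ F : A ⥤ ModuleCat k, γ F ≫ γ F = 𝟙 _) ∧
      -- `γ ∘ τ_d(cr_d) = cr_d(τ_d)`
      (∀ F : A ⥤ ModuleCat k,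
        (tauFun k A d).map (crNat d F) ≫ γ F = crNat d ((tauFun k A d).obj F)) := by
  refine ⟨fun F => { app := fun a => F.map (swapHom d a), naturality := ?_ }, ?_, ?_, ?_⟩
  · intro a b f
    have := swapHom_natural (A := A) d f
    dsimp [tauFun]
    rw [← F.map_comp, ← F.map_comp]
    exact congrArg F.map this
  · intro F G f
    apply NatTrans.ext
    funext a
    show f.app ((tFun A d).obj ((tFun A d).obj a)) ≫ G.map (swapHom d a) =
      F.map (swapHom d a) ≫ f.app ((tFun A d).obj ((tFun A d).obj a))
    exact (f.naturality (swapHom d a)).symm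
  · intro F
    apply NatTrans.ext
    funext a
    show F.map (swapHom d a) ≫ F.map (swapHom d a) = 𝟙 _
    rw [← F.map_comp, swapHom_invol, F.map_id]
  · intro F
    apply NatTrans.ext
    funext a
    show (crNat d F).app ((tFun A d).obj a) ≫ F.map (swapHom d a) =
      (crNat d ((tauFun k A d).obj F)).app a
    rw [crNat_app, crNat_app]
    simp only [Preadditive.sum_comp, Preadditive.zsmul_comp]
    refine Finset.sum_congr rfl fun I _ => ?_
    rw [← F.map_comp, uNat_swap]
    rfl


end
end

section
/- Let M‚āÄ(A) be the subcategory of a small additive category A whose morphisms are the zero morphisms and the split monomorphisms, and őł the restriction functor Fct(A,k-Mod) ‚Üí Fct(M‚āÄ(A),k-Mod). Say F satisfies (RM)^d if őł(cr_d(F)) is a split monomorphism. If f : F ‚Üí G is a morphism between functors satisfying (RM)^d together with chosen retractions r_F, r_G that commute with őł(f) (i.e. r_G ‚ąė őłŌĄ_d(f) = őł(f) ‚ąė r_F), then both ker(f) and coker(f) satisfy (RM)^d. -/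
open CategoryTheory CategoryTheory.Limits

section M0

variable (B : Type*) [Category B] [Limits.HasZeroMorphisms B]

/-- `M₀(B)` : same objects as `B`, morphisms the zero morphisms and split monomorphisms. -/
def M0 := B

instance : Category (M0 B) where
  Hom a b := {f : (show B from a) ⟶ (show B from b) // f = 0 ∨ IsSplitMono f}
  id a := ⟨𝟙 _, Or.inr inferInstance⟩
  comp {a b c} f g := ⟨f.1 ≫ g.1, by
    rcases f.2 with hf | hf
    · exact Or.inl (by rw [hf, Limits.zero_comp])
    · rcases g.2 with hg | hg
      · exact Or.inl (by rw [hg, Limits.comp_zero])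
      · exact Or.inr (by haveI := hf; haveI := hg; infer_instance)⟩
  id_comp f := Subtype.ext (Category.id_comp f.1)
  comp_id f := Subtype.ext (Category.comp_id f.1)
  assoc f g h := Subtype.ext (Category.assoc f.1 g.1 h.1)

/-- the inclusion `M₀(B) ⥤ B`. -/
@[simps] def M0.incl : M0 B ⥤ B where
  obj a := a
  map f := f.1

end M0

section Theta

variable {k : Type} [CommRing k] (B : Type*) [Category B] [Limits.HasZeroMorphisms B]

/-- `θ`, the restriction functor along `M₀(B) ⥤ B`. -/
def theta (k : Type) [CommRing k] : (B ⥤ ModuleCat k) ⥤ (M0 B ⥤ ModuleCat k) :=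
  (Functor.whiskeringLeft (M0 B) B (ModuleCat k)).obj (M0.incl B)

end Theta

section RM

variable {k : Type} [CommRing k] {A : Type*} [Category A] [Preadditive A]
  [Limits.HasFiniteBiproducts A]

/-- condition `(RM)^d` : the restriction of the cross effect to `M₀(A)` is a split mono. -/
def RM (d : ℕ) (F : A ⥤ ModuleCat k) : Prop :=
  ∃ r : (theta A k).obj (tFun A d ⋙ F) ⟶ (theta A k).obj F,
    (theta A k).map (crNat d F) ≫ r = 𝟙 _

end RM

noncomputable section

variable {k : Type} [CommRing k] {A : Type} [SmallCategory A] [Preadditive A]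
  [Limits.HasFiniteBiproducts A]

lemma cr_comm {A : Type*} [Category A] [Preadditive A] [Limits.HasFiniteBiproducts A]
    {D : Type*} [Category D] [Preadditive D] (d : ℕ) {F G : A ⥤ D} (f : F ⟶ G) :
    crNat d F ≫ Functor.whiskerLeft (tFun A d) f = f ≫ crNat d G := by
  ext a
  simp only [NatTrans.comp_app, crNat_app, Functor.whiskerLeft_app, Preadditive.sum_comp,
    Preadditive.comp_sum, Preadditive.zsmul_comp, Preadditive.comp_zsmul]
  exact Finset.sum_congr rfl fun I _ => by rw [f.naturality]; rfl

/-- Kernels and cokernels of `(RM)^d`-compatible morphisms satisfy `(RM)^d`. -/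
theorem stmt8 (d : ℕ) (F G : A ⥤ ModuleCat k) (f : F ⟶ G)
    (rF : (theta A k).obj (tFun A d ⋙ F) ⟶ (theta A k).obj F)
    (rG : (theta A k).obj (tFun A d ⋙ G) ⟶ (theta A k).obj G)
    (hrF : (theta A k).map (crNat d F) ≫ rF = 𝟙 _)
    (hrG : (theta A k).map (crNat d G) ≫ rG = 𝟙 _)
    (compat : (theta A k).map (Functor.whiskerLeft (tFun A d) f) ≫ rG = rF ≫ (theta A k).map f) :
    RM d (kernel f) ∧ RM d (cokernel f) := by
  classical
  let θ : (A ⥤ ModuleCat k) ⥤ (M0 A ⥤ ModuleCat k) := theta A k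
  let Θ : (A ⥤ ModuleCat k) ⥤ (M0 A ⥤ ModuleCat k) :=
    (Functor.whiskeringLeft A A (ModuleCat k)).obj (tFun A d) ⋙ theta A k
  have hΘmap : ∀ {X Y : A ⥤ ModuleCat k} (g : X ⟶ Y),
      Θ.map g = θ.map (Functor.whiskerLeft (tFun A d) g) := fun _ => rfl
  haveI hθa : θ.Additive := ⟨by intros; ext a; rfl⟩
  haveI hΘa : Θ.Additive := ⟨by intros; ext a; rfl⟩
  haveI l1 : PreservesLimitsOfShape WalkingParallelPair θ :=
    whiskeringLeft_preservesLimitsOfShape _ _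
  haveI l2 : PreservesColimitsOfShape WalkingParallelPair θ :=
    whiskeringLeft_preservesColimitsOfShape _ _
  haveI l3 : PreservesLimitsOfShape WalkingParallelPair Θ := by
    have := whiskeringLeft_preservesLimitsOfShape (D := ModuleCat k)
      WalkingParallelPair (tFun A d)
    exact comp_preservesLimitsOfShape _ _
  haveI l4 : PreservesColimitsOfShape WalkingParallelPair Θ := by
    have := whiskeringLeft_preservesColimitsOfShape (D := ModuleCat k)
      WalkingParallelPair (tFun A d)
    exact comp_preservesColimitsOfShape _ _
  have hwz : Functor.whiskerLeft (tFun A d) (0 : kernel f ⟶ G) = 0 := by ext a; rfl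
  constructor
  · -- kernel
    let ι := kernel.ι f
    have hw : Θ.map ι ≫ rF ≫ θ.map f = 0 := by
      rw [hΘmap, ← compat, ← Category.assoc, ← θ.map_comp, ← Functor.whiskerLeft_comp,
        kernel.condition, hwz, θ.map_zero, zero_comp]
    refine ⟨kernel.lift (θ.map f) (Θ.map ι ≫ rF) (by rw [Category.assoc, hw]) ≫
      inv (kernelComparison f θ), ?_⟩
    have hmono : Mono (θ.map ι) := by
      rw [show θ.map ι = kernelComparison f θ ≫ kernel.ι (θ.map f) from
        (kernelComparison_comp_ι f θ).symm]
      infer_instance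
    rw [← cancel_mono (θ.map ι)]
    have h1 : inv (kernelComparison f θ) ≫ θ.map ι = kernel.ι (θ.map f) := by
      rw [IsIso.inv_comp_eq, kernelComparison_comp_ι]
    rw [Category.assoc, Category.assoc, h1, kernel.lift_ι, Category.id_comp,
      ← Category.assoc]
    have h2 : crNat d (kernel f) ≫ Functor.whiskerLeft (tFun A d) ι = ι ≫ crNat d F := cr_comm d ι
    have : θ.map (crNat d (kernel f)) ≫ Θ.map ι = θ.map ι ≫ θ.map (crNat d F) := by
      rw [hΘmap, ← θ.map_comp, ← θ.map_comp, h2]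
    rw [this, Category.assoc, hrF, Category.comp_id]
  · -- cokernel
    let π := cokernel.π f
    have hw : Θ.map f ≫ rG ≫ θ.map π = 0 := by
      rw [hΘmap, ← Category.assoc, compat, Category.assoc, ← θ.map_comp,
        cokernel.condition, θ.map_zero, comp_zero]
    refine ⟨inv (cokernelComparison f Θ) ≫
      cokernel.desc (Θ.map f) (rG ≫ θ.map π) hw, ?_⟩
    have hepi : Epi (θ.map π) := by
      rw [show θ.map π = cokernel.π (θ.map f) ≫ cokernelComparison f θ from
        (π_comp_cokernelComparison f θ).symm]
      infer_instance
    rw [← cancel_epi (θ.map π)]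
    have h1 : Θ.map π ≫ inv (cokernelComparison f Θ) = cokernel.π (Θ.map f) := by
      rw [IsIso.comp_inv_eq, π_comp_cokernelComparison]
    have h2 : crNat d (cokernel f) = crNat d (cokernel f) := rfl
    have h3 : θ.map π ≫ θ.map (crNat d (cokernel f)) = θ.map (crNat d G) ≫ Θ.map π := by
      rw [hΘmap, ← θ.map_comp, ← θ.map_comp, cr_comm]
    rw [← Category.assoc, h3, Category.assoc, ← Category.assoc (Θ.map π), h1,
      cokernel.π_desc, ← Category.assoc, hrG, Category.id_comp, Category.comp_id]


end
end

section
/- If F : A ‚Üí k-Mod satisfies condition (RM)^d (őł(cr_d(F)) is a split monomorphism in Fct(M‚āÄ(A), k-Mod)), then ŌĄ_d F also satisfies (RM)^d, and the retractions can be chosen so that cr_d(F) : F ‚Üí ŌĄ_d F is compatible with them (the square r_{ŌĄ_d F} ‚ąė őłŌĄ_d(cr_d(F)) = őł(cr_d(F)) ‚ąė r_F commutes). -/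
open CategoryTheory CategoryTheory.Limits

noncomputable section

variable {k : Type} [CommRing k] {A : Type} [SmallCategory A] [Preadditive A]
  [Limits.HasFiniteBiproducts A]


section Stmt9Aux

open CategoryTheory Limits

variable {k : Type} [CommRing k] {A : Type} [SmallCategory A] [Preadditive A]
  [Limits.HasFiniteBiproducts A]

/-- The swap involution on `t (t a)`. -/
noncomputable def sigmaSwap (d : ℕ) (a : A) :
    (tFun A d).obj ((tFun A d).obj a) ⟶ (tFun A d).obj ((tFun A d).obj a) :=
  biproduct.lift fun i => biproduct.map fun _ => biproduct.π (fun _ : Fin (d + 1) => a) i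

lemma sigmaSwap_π_π (d : ℕ) (a : A) (i j : Fin (d + 1)) :
    sigmaSwap d a ≫ biproduct.π _ i ≫ biproduct.π _ j =
      biproduct.π (fun _ : Fin (d+1) => (tFun A d).obj a) j ≫
        biproduct.π (fun _ : Fin (d+1) => a) i := by
  unfold sigmaSwap
  erw [biproduct.lift_π_assoc, biproduct.map_π]

lemma sigmaSwap_invol (d : ℕ) (a : A) : sigmaSwap d a ≫ sigmaSwap d a = 𝟙 _ := by
  refine biproduct.hom_ext _ _ fun i => biproduct.hom_ext _ _ fun j => ?_
  erw [Category.assoc, Category.assoc, sigmaSwap_π_π, sigmaSwap_π_π, Category.id_comp]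
  rfl

lemma tmap_u_comp_sigmaSwap (d : ℕ) (a : A) (I : Finset (Fin (d + 1))) :
    (tFun A d).map ((uNat A d I).app a) ≫ sigmaSwap d a =
      (uNat A d I).app ((tFun A d).obj a) := by
  refine biproduct.hom_ext _ _ fun i => biproduct.hom_ext _ _ fun j => ?_
  erw [Category.assoc, Category.assoc, sigmaSwap_π_π, tFun_map, biproduct.map_π_assoc, uNat_app,
    uNat_app, biproduct.lift_π, biproduct.lift_π]
  by_cases h : i ∈ I
  · simp [h]
    exact (Category.id_comp _).symm
  · simp [h]
    exact zero_comp.symm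

lemma u_comp_sigmaSwap (d : ℕ) (a : A) (I : Finset (Fin (d + 1))) :
    (uNat A d I).app ((tFun A d).obj a) ≫ sigmaSwap d a =
      (tFun A d).map ((uNat A d I).app a) := by
  rw [← tmap_u_comp_sigmaSwap, Category.assoc, sigmaSwap_invol, Category.comp_id]

lemma sigmaSwap_natural (d : ℕ) {a b : A} (f : a ⟶ b) :
    (tFun A d).map ((tFun A d).map f) ≫ sigmaSwap d b =
      sigmaSwap d a ≫ (tFun A d).map ((tFun A d).map f) := by
  refine biproduct.hom_ext _ _ fun i => biproduct.hom_ext _ _ fun j => ?_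
  erw [Category.assoc, Category.assoc, sigmaSwap_π_π, Category.assoc, Category.assoc, tFun_map,
    biproduct.map_π_assoc, tFun_map, biproduct.map_π,
    biproduct.map_π_assoc, biproduct.map_π]
  have h := sigmaSwap_π_π d a i j =≫ f
  erw [Category.assoc, Category.assoc, Category.assoc] at h
  exact h.symm

/-- `u_I` as a morphism of `M₀(A)`. -/
noncomputable def uM0 (d : ℕ) (a : A) (I : Finset (Fin (d + 1))) :
    (show M0 A from a) ⟶ (show M0 A from (tFun A d).obj a) := by
  refine ⟨(uNat A d I).app a, ?_⟩
  rcases I.eq_empty_or_nonempty with h | ⟨i, hi⟩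
  · subst h
    refine Or.inl (biproduct.hom_ext _ _ fun j => ?_)
    simp
    exact (zero_comp).symm
  · refine Or.inr ⟨⟨(pNat A d {i}).app a, ?_⟩⟩
    simp only [uNat_app, pNat_app]
    erw [biproduct.lift_desc]
    rw [Finset.sum_eq_single i]
    · simp [hi]
    · intro j _ hj
      simp [hj]
    · simp

lemma tFun_map_zero (d : ℕ) (a b : A) : (tFun A d).map (0 : a ⟶ b) = 0 := by
  refine biproduct.hom_ext _ _ fun j => ?_
  simp [tFun]
  exact (zero_comp).symm

/-- `t f` as a morphism of `M₀(A)`. -/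
noncomputable def tM0map (d : ℕ) {a b : A} (f : (show M0 A from a) ⟶ (show M0 A from b)) :
    (show M0 A from (tFun A d).obj a) ⟶ (show M0 A from (tFun A d).obj b) := by
  refine ⟨(tFun A d).map f.1, ?_⟩
  rcases f.2 with h | h
  · exact Or.inl (by rw [h, tFun_map_zero])
  · refine Or.inr ⟨⟨(tFun A d).map (retraction f.1), ?_⟩⟩
    rw [← (tFun A d).map_comp, IsSplitMono.id f.1, (tFun A d).map_id]

end Stmt9Aux

/-- If `F` satisfies `(RM)^d` then so does `τ_d F`, with retractions chosen so that
`cr_d(F) : F ⟶ τ_d F` is `(RM)^d`-compatible. -/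
theorem stmt9 (d : ℕ) (F : A ⥤ ModuleCat k)
    (rF : (theta A k).obj (tFun A d ⋙ F) ⟶ (theta A k).obj F)
    (hrF : (theta A k).map (crNat d F) ≫ rF = 𝟙 _) :
    ∃ r' : (theta A k).obj (tFun A d ⋙ (tFun A d ⋙ F)) ⟶ (theta A k).obj (tFun A d ⋙ F),
      (theta A k).map (crNat d (tFun A d ⋙ F)) ≫ r' = 𝟙 _ ∧
      (theta A k).map (Functor.whiskerLeft (tFun A d) (crNat d F)) ≫ r' =
        rF ≫ (theta A k).map (crNat d F) := by
  refine ⟨{ app := fun a => F.map (sigmaSwap d ((M0.incl A).obj a)) ≫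
      rF.app (show M0 A from (tFun A d).obj ((M0.incl A).obj a)), naturality := ?_ }, ?_, ?_⟩
  · intro a b f
    have h1 := rF.naturality (tM0map d f)
    simp only [theta, Functor.whiskeringLeft_obj_obj, Functor.comp_map, M0.incl_map, M0.incl_obj,
      tM0map] at h1 ⊢
    erw [← Category.assoc, ← F.map_comp, sigmaSwap_natural, F.map_comp, Category.assoc, h1,
      ← Category.assoc]
  · refine NatTrans.ext (funext fun a => ?_)
    have key : ∀ I : Finset (Fin (d+1)),
        F.map ((tFun A d).map ((uNat A d I).app ((M0.incl A).obj a))) ≫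
          F.map (sigmaSwap d ((M0.incl A).obj a)) =
        F.map ((uNat A d I).app ((tFun A d).obj ((M0.incl A).obj a))) := by
      intro I
      rw [← F.map_comp, tmap_u_comp_sigmaSwap]
    have h2 := NatTrans.congr_app hrF (show M0 A from (tFun A d).obj ((M0.incl A).obj a))
    refine Eq.trans ?_ h2
    erw [NatTrans.comp_app, NatTrans.comp_app]
    dsimp only [theta, Functor.whiskeringLeft_obj_map, Functor.whiskerLeft_app, crNat_app]
    erw [Functor.whiskerLeft_app, crNat_app, crNat_app]
    erw [Preadditive.sum_comp, Preadditive.sum_comp]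
    refine Finset.sum_congr rfl fun I _ => ?_
    erw [Preadditive.zsmul_comp, Preadditive.zsmul_comp, ← Category.assoc, key I]
    rfl
  · refine NatTrans.ext (funext fun a => ?_)
    have key : ∀ I : Finset (Fin (d+1)),
        F.map ((uNat A d I).app ((tFun A d).obj ((M0.incl A).obj a))) ≫
          F.map (sigmaSwap d ((M0.incl A).obj a)) =
        F.map ((tFun A d).map ((uNat A d I).app ((M0.incl A).obj a))) := by
      intro I
      rw [← F.map_comp, u_comp_sigmaSwap]
    have hnat : ∀ I : Finset (Fin (d+1)),
        F.map ((tFun A d).map ((uNat A d I).app ((M0.incl A).obj a))) ≫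
          rF.app (show M0 A from (tFun A d).obj ((M0.incl A).obj a)) =
        rF.app a ≫ F.map ((uNat A d I).app ((M0.incl A).obj a)) := by
      intro I
      exact rF.naturality (uM0 d ((M0.incl A).obj a) I)
    erw [NatTrans.comp_app, NatTrans.comp_app]
    dsimp only [theta, Functor.whiskeringLeft_obj_map, Functor.whiskerLeft_app, crNat_app]
    erw [crNat_app, crNat_app]
    erw [Preadditive.sum_comp, Preadditive.comp_sum]
    refine Finset.sum_congr rfl fun I _ => ?_
    erw [Preadditive.zsmul_comp, Preadditive.comp_zsmul, ← Category.assoc, key I, hnat I]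
    rfl

end
end
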